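/- Asymptotic risk of the approximated projection estimator based on discrete observations. Let D be a Borel subset of ℝ ∖ {0}, η a σ-finite measure on D, and s : D → [0, ∞) a bounded measurable function with ∫_D s² dη < ∞. Let 𝒮 be a finite-dimensional subspace of L²(D, η) spanned by measurable functions φ₁, …, φ_d orthonormal in L²(D, η), each extended by 0 to all of ℝ, and let s^⊥ = Σᵢ (∫_D φᵢ s dη) φᵢ be the orthogonal projection of s on 𝒮. Let X = {X(t)}_{t ≥ 0} be a real-valued stochastic process with X(0) = 0 and stationary independent increments, and suppose that for each i = 1, …, d and all small t > 0 the random variables φᵢ(X(t)) and φᵢ(X(t))² are integrable with lim_{t→0⁺} (1/t) E[φᵢ(X(t))] = ∫_D φᵢ s dη and lim_{t→0⁺} (1/t) E[φᵢ(X(t))²] = ∫_D φᵢ² s dη. Fix T > 0 and define the approximated projection estimator ŝⁿ = Σᵢ β̂ⁿᵢ φᵢ, with β̂ⁿᵢ = (1/T) Σ_{k=1}^n φᵢ( X(kT/n) − X((k−1)T/n) ). Then lim_{n→∞} E[ ‖ŝⁿ − s^⊥‖² ] = (1/T) Σ_{i=1}^d ∫_D φᵢ² s dη, and lim_{n→∞}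 E[ ‖ŝⁿ − s‖² ] = ‖s − s^⊥‖² + (1/T) Σ_{i=1}^d ∫_D φᵢ² s dη, where ‖f‖² = ∫_D f² dη. -/

import Mathlib

open MeasureTheory ProbabilityTheory Filter

noncomputable section

namespace ApproxProj

/-- coefficient statistics `β̂ⁿᵢ = (1/T) Σ_{k=1}^n φᵢ(X(kT/n) − X((k−1)T/n))` -/
def bhat {Ω : Type*} (X : ℝ → Ω → ℝ) (T : ℝ) (φ : ℝ → ℝ) (n : ℕ) (ω : Ω) : ℝ :=
  (1 / T) * ∑ k ∈ Finset.range n, φ (X (((k : ℝ) + 1) * T / n) ω - X ((k : ℝ) * T / n) ω)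

section Aux

variable {α : Type*} [MeasurableSpace α] {μ : Measure α}

lemma integrable_mul_of_mem2 {f g : α → ℝ} (hf : MemLp f 2 μ) (hg : MemLp g 2 μ) :
    Integrable (fun x => f x * g x) μ := by
  have h : MemLp (f • g) 1 μ := hg.smul hf (hpqr := ⟨by
    rw [ENNReal.inv_two_add_inv_two]; simp⟩)
  exact memLp_one_iff_integrable.1 h

lemma norm_sq_expand {μ : Measure ℝ} {d : ℕ} (φ : Fin d → ℝ → ℝ)
    (hmem : ∀ i, MemLp (φ i) 2 μ)
    (horth : ∀ i j, (∫ x, φ i x * φ j x ∂μ) = if i = j then (1 : ℝ) else 0)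
    (c : Fin d → ℝ) :
    ∫ x, (∑ i, c i * φ i x) ^ 2 ∂μ = ∑ i, (c i) ^ 2 := by
  have hφφ : ∀ i j, Integrable (fun x => φ i x * φ j x) μ :=
    fun i j => integrable_mul_of_mem2 (hmem i) (hmem j)
  have hterm : ∀ i j : Fin d, Integrable (fun x => (c i * φ i x) * (c j * φ j x)) μ := by
    intro i j
    exact ((hφφ i j).const_mul (c i * c j)).congr (Eventually.of_forall fun x => by ring)
  calc ∫ x, (∑ i, c i * φ i x) ^ 2 ∂μ
      = ∫ x, ∑ i, ∑ j, (c i * φ i x) * (c j * φ j x) ∂μ := by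
        congr 1; funext x; rw [sq, Finset.sum_mul_sum]
    _ = ∑ i, ∑ j, ∫ x, (c i * φ i x) * (c j * φ j x) ∂μ := by
        rw [integral_finset_sum _ fun i _ => integrable_finset_sum _ fun j _ => hterm i j]
        exact Finset.sum_congr rfl fun i _ => integral_finset_sum _ fun j _ => hterm i j
    _ = ∑ i, ∑ j, (c i * c j) * ∫ x, φ i x * φ j x ∂μ := by
        refine Finset.sum_congr rfl fun i _ => Finset.sum_congr rfl fun j _ => ?_
        rw [← integral_const_mul]
        congr 1; funext x; ring
    _ = ∑ i, (c i) ^ 2 := by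
        simp only [horth, mul_ite, mul_one, mul_zero]
        refine Finset.sum_congr rfl fun i _ => ?_
        rw [Finset.sum_ite_eq, if_pos (Finset.mem_univ i), sq]

lemma norm_sq_expand_sub {μ : Measure ℝ} {d : ℕ} (φ : Fin d → ℝ → ℝ)
    (hmem : ∀ i, MemLp (φ i) 2 μ)
    (horth : ∀ i j, (∫ x, φ i x * φ j x ∂μ) = if i = j then (1 : ℝ) else 0)
    (c : Fin d → ℝ) (v : ℝ → ℝ) (hv : MemLp v 2 μ)
    (hperp : ∀ i, (∫ x, φ i x * v x ∂μ) = 0) :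
    ∫ x, (∑ i, c i * φ i x - v x) ^ 2 ∂μ = (∑ i, (c i) ^ 2) + ∫ x, (v x) ^ 2 ∂μ := by
  have hu : MemLp (fun x => ∑ i, c i * φ i x) 2 μ :=
    memLp_finset_sum Finset.univ (fun i _ => (hmem i).const_mul (c i))
  have huv : Integrable (fun x => (∑ i, c i * φ i x) * v x) μ := integrable_mul_of_mem2 hu hv
  have hu2 : Integrable (fun x => (∑ i, c i * φ i x) ^ 2) μ := hu.integrable_sq
  have hv2 : Integrable (fun x => (v x) ^ 2) μ := hv.integrable_sq
  calc ∫ x, (∑ i, c i * φ i x - v x) ^ 2 ∂μ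
      = ∫ x, (((∑ i, c i * φ i x) ^ 2 + (v x) ^ 2) - 2 * ((∑ i, c i * φ i x) * v x)) ∂μ := by
        congr 1; funext x; ring
    _ = (∫ x, ((∑ i, c i * φ i x) ^ 2 + (v x) ^ 2) ∂μ)
        - ∫ x, 2 * ((∑ i, c i * φ i x) * v x) ∂μ := integral_sub (hu2.add hv2) (huv.const_mul 2)
    _ = ((∫ x, (∑ i, c i * φ i x) ^ 2 ∂μ) + ∫ x, (v x) ^ 2 ∂μ)
        - 2 * ∫ x, (∑ i, c i * φ i x) * v x ∂μ := by
        rw [integral_add hu2 hv2, integral_const_mul]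
    _ = (∑ i, (c i) ^ 2) + ∫ x, (v x) ^ 2 ∂μ := by
        rw [norm_sq_expand φ hmem horth c]
        have h0 : ∫ x, (∑ i, c i * φ i x) * v x ∂μ = 0 := by
          have hiv : ∀ i : Fin d, Integrable (fun x => c i * (φ i x * v x)) μ :=
            fun i => (integrable_mul_of_mem2 (hmem i) hv).const_mul (c i)
          calc ∫ x, (∑ i, c i * φ i x) * v x ∂μ
              = ∫ x, ∑ i, c i * (φ i x * v x) ∂μ := by
                congr 1; funext x
                rw [Finset.sum_mul]
                exact Finset.sum_congr rfl fun i _ => by ring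
            _ = ∑ i, c i * ∫ x, φ i x * v x ∂μ := by
                rw [integral_finset_sum _ fun i _ => hiv i]
                exact Finset.sum_congr rfl fun i _ => integral_const_mul _ _
            _ = 0 := by simp [hperp]
        rw [h0]; ring

lemma integral_sub_const_sq {Ω : Type*} [MeasurableSpace Ω] {P : Measure Ω}
    [IsProbabilityMeasure P] {S : Ω → ℝ} (hS : MemLp S 2 P) (b : ℝ) :
    ∫ ω, (S ω - b) ^ 2 ∂P = variance S P + ((∫ ω, S ω ∂P) - b) ^ 2 := by
  have hS1 : Integrable S P := hS.integrable one_le_two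
  have hS2 : Integrable (fun ω => S ω ^ 2) P := hS.integrable_sq
  have hvar : variance S P = (∫ ω, S ω ^ 2 ∂P) - (∫ ω, S ω ∂P) ^ 2 := by
    rw [variance_eq_sub hS]
    simp only [Pi.pow_apply]
  calc ∫ ω, (S ω - b) ^ 2 ∂P
      = ∫ ω, (S ω ^ 2 - ((2 * b) * S ω - b ^ 2)) ∂P := by congr 1; funext ω; ring
    _ = (∫ ω, S ω ^ 2 ∂P) - ∫ ω, ((2 * b) * S ω - b ^ 2) ∂P :=
        integral_sub hS2 ((hS1.const_mul (2 * b)).sub (integrable_const (b ^ 2)))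
    _ = (∫ ω, S ω ^ 2 ∂P) - ((∫ ω, (2 * b) * S ω ∂P) - ∫ (_ : Ω), b ^ 2 ∂P) := by
        congr 1
        exact integral_sub (hS1.const_mul (2 * b)) (integrable_const (b ^ 2))
    _ = (∫ ω, S ω ^ 2 ∂P) - ((2 * b) * (∫ ω, S ω ∂P) - b ^ 2) := by
        rw [integral_const_mul, integral_const]
        simp
    _ = variance S P + ((∫ ω, S ω ∂P) - b) ^ 2 := by rw [hvar]; ring

lemma core_moment {Ω : Type*} [MeasurableSpace Ω] {P : Measure Ω} [IsProbabilityMeasure P]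
    {n : ℕ} (hn : 1 ≤ n) (Y : Fin n → Ω → ℝ) (hmeas : ∀ k, Measurable (Y k))
    (hindep : Set.Pairwise ↑(Finset.univ : Finset (Fin n)) fun k l => IndepFun (Y k) (Y l) P)
    (hsq : ∀ k, Integrable (fun ω => (Y k ω) ^ 2) P)
    {m q : ℝ} (hm : ∀ k, ∫ ω, Y k ω ∂P = m) (hq : ∀ k, ∫ ω, (Y k ω) ^ 2 ∂P = q)
    {T : ℝ} (hT : T ≠ 0) (b : ℝ) :
    Integrable (fun ω => ((1 / T) * ∑ k, Y k ω - b) ^ 2) P ∧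
    ∫ ω, ((1 / T) * ∑ k, Y k ω - b) ^ 2 ∂P
      = (1 / T) * (((n : ℝ) / T) * q) - (1 / (n : ℝ)) * (((n : ℝ) / T) * m) ^ 2
        + (((n : ℝ) / T) * m - b) ^ 2 := by
  have hY2 : ∀ k, MemLp (Y k) 2 P :=
    fun k => (memLp_two_iff_integrable_sq (hmeas k).aestronglyMeasurable).2 (hsq k)
  have hS : MemLp (fun ω => ∑ k, Y k ω) 2 P := memLp_finset_sum Finset.univ fun k _ => hY2 k
  have hSc : MemLp (fun ω => (1 / T) * ∑ k, Y k ω - b) 2 P :=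
    (hS.const_mul (1 / T)).sub (memLp_const b)
  have hint : Integrable (fun ω => ((1 / T) * ∑ k, Y k ω - b) ^ 2) P := hSc.integrable_sq
  refine ⟨hint, ?_⟩
  have hfe : (fun ω => ∑ k, Y k ω) = ∑ k ∈ Finset.univ, Y k := by
    funext ω; simp
  have hvarS : variance (fun ω => ∑ k, Y k ω) P = (n : ℝ) * (q - m ^ 2) := by
    rw [hfe, IndepFun.variance_sum (fun k _ => hY2 k) hindep]
    have hv : ∀ k : Fin n, variance (Y k) P = q - m ^ 2 := by
      intro k
      rw [variance_eq_sub (hY2 k)]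
      simp only [Pi.pow_apply]
      rw [hq k, hm k]
    simp [hv, Finset.sum_const, Finset.card_univ, nsmul_eq_mul]
    ring
  have hES : ∫ ω, (∑ k, Y k ω) ∂P = (n : ℝ) * m := by
    rw [integral_finset_sum _ fun k _ => (hY2 k).integrable one_le_two]
    simp [hm, Finset.sum_const, Finset.card_univ, nsmul_eq_mul]
  have hn' : ((n : ℝ)) ≠ 0 := Nat.cast_ne_zero.2 (by omega)
  calc ∫ ω, ((1 / T) * ∑ k, Y k ω - b) ^ 2 ∂P
      = ∫ ω, (1 / T) ^ 2 * ((∑ k, Y k ω) - T * b) ^ 2 ∂P := by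
        congr 1; funext ω; field_simp
    _ = (1 / T) ^ 2 * ∫ ω, ((∑ k, Y k ω) - T * b) ^ 2 ∂P := integral_const_mul _ _
    _ = (1 / T) ^ 2 * ((n : ℝ) * (q - m ^ 2) + ((n : ℝ) * m - T * b) ^ 2) := by
        rw [integral_sub_const_sq hS (T * b), hvarS, hES]
    _ = (1 / T) * (((n : ℝ) / T) * q) - (1 / (n : ℝ)) * (((n : ℝ) / T) * m) ^ 2
        + (((n : ℝ) / T) * m - b) ^ 2 := by
        field_simp

end Aux

/-- **Asymptotic risk of the approximated projection estimator based on discrete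
observations.** Under the small-time limit conditions on the increments of `X`, the risk of
the approximated projection estimator `ŝⁿ = Σᵢ β̂ⁿᵢ φᵢ` converges to that of the
continuous-time projection estimator:
`E‖ŝⁿ − s^⊥‖² → (1/T) Σᵢ ∫_D φᵢ² s dη` and
`E‖ŝⁿ − s‖² → ‖s − s^⊥‖² + (1/T) Σᵢ ∫_D φᵢ² s dη`. -/
theorem approximated_projection_estimator_asymptotic_risk
    {Ω : Type*} [MeasurableSpace Ω] (P : Measure Ω) [IsProbabilityMeasure P]
    (D : Set ℝ) (hD : MeasurableSet D) (hD0 : ∀ x ∈ D, x ≠ 0)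
    (η : Measure ℝ) [SigmaFinite η]
    (s : ℝ → ℝ) (hsmeas : Measurable s) (hsnonneg : ∀ x ∈ D, 0 ≤ s x)
    (hsbdd : ∃ B : ℝ, ∀ x ∈ D, s x ≤ B)
    (hssq : (∫⁻ x in D, ENNReal.ofReal ((s x) ^ 2) ∂η) < ⊤)
    (d : ℕ) (φ : Fin d → ℝ → ℝ) (hφmeas : ∀ i, Measurable (φ i))
    (hφzero : ∀ i, ∀ x ∉ D, φ i x = 0)
    (horth : ∀ i j, (∫ x in D, φ i x * φ j x ∂η) = if i = j then (1 : ℝ) else 0)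
    (X : ℝ → Ω → ℝ) (hXmeas : ∀ t, Measurable (X t)) (hX0 : ∀ ω, X 0 ω = 0)
    (hindep : ∀ (n : ℕ) (t : Fin (n + 1) → ℝ), Monotone t → 0 ≤ t 0 →
      iIndepFun
        (fun (i : Fin n) (ω : Ω) => X (t i.succ) ω - X (t i.castSucc) ω) P)
    (hstat : ∀ t h : ℝ, 0 ≤ t → 0 ≤ h →
      Measure.map (fun ω => X (t + h) ω - X t ω) P = Measure.map (X h) P)
    (hint : ∀ i, ∀ᶠ t in nhdsWithin (0 : ℝ) (Set.Ioi 0),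
      Integrable (fun ω => φ i (X t ω)) P ∧ Integrable (fun ω => (φ i (X t ω)) ^ 2) P)
    (hlim1 : ∀ i, Tendsto (fun t : ℝ => (1 / t) * ∫ ω, φ i (X t ω) ∂P)
      (nhdsWithin 0 (Set.Ioi 0)) (nhds (∫ x in D, φ i x * s x ∂η)))
    (hlim2 : ∀ i, Tendsto (fun t : ℝ => (1 / t) * ∫ ω, (φ i (X t ω)) ^ 2 ∂P)
      (nhdsWithin 0 (Set.Ioi 0)) (nhds (∫ x in D, (φ i x) ^ 2 * s x ∂η)))
    (T : ℝ) (hT : 0 < T) :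
    Tendsto (fun n : ℕ => ∫⁻ ω, ENNReal.ofReal
        (∫ x in D,
          ((∑ i, bhat X T (φ i) n ω * φ i x) -
            ∑ i, (∫ y in D, φ i y * s y ∂η) * φ i x) ^ 2 ∂η) ∂P)
      atTop (nhds (ENNReal.ofReal ((1 / T) * ∑ i, ∫ x in D, (φ i x) ^ 2 * s x ∂η))) ∧
    Tendsto (fun n : ℕ => ∫⁻ ω, ENNReal.ofReal
        (∫ x in D, ((∑ i, bhat X T (φ i) n ω * φ i x) - s x) ^ 2 ∂η) ∂P)
      atTop
      (nhds (ENNReal.ofReal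
        ((∫ x in D, (s x - ∑ i, (∫ y in D, φ i y * s y ∂η) * φ i x) ^ 2 ∂η) +
          (1 / T) * ∑ i, ∫ x in D, (φ i x) ^ 2 * s x ∂η))) := by
  classical
  have hT' : T ≠ 0 := ne_of_gt hT
  -- L² facts on the function side
  have hφsq : ∀ i, Integrable (fun x => φ i x * φ i x) (η.restrict D) := by
    intro i
    by_contra h
    have h1 := horth i i
    rw [integral_undef h] at h1
    simp at h1
  have hφmem : ∀ i, MemLp (φ i) 2 (η.restrict D) := fun i =>
    (memLp_two_iff_integrable_sq (hφmeas i).aestronglyMeasurable).2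
      ((hφsq i).congr (Eventually.of_forall fun x => (pow_two (φ i x)).symm))
  have hsmem : MemLp s 2 (η.restrict D) := by
    refine (memLp_two_iff_integrable_sq hsmeas.aestronglyMeasurable).2 ?_
    refine ⟨(hsmeas.pow_const 2).aestronglyMeasurable, ?_⟩
    rw [hasFiniteIntegral_iff_norm]
    have he : ∀ x : ℝ, ENNReal.ofReal ‖s x ^ 2‖ = ENNReal.ofReal (s x ^ 2) := fun x => by
      rw [Real.norm_eq_abs, abs_of_nonneg (sq_nonneg _)]
    simpa only [he] using hssq
  have hvmem : MemLp (fun x => s x - ∑ i, (∫ y in D, φ i y * s y ∂η) * φ i x) 2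
      (η.restrict D) := by
    have h2 : MemLp (fun x => ∑ i, (∫ y in D, φ i y * s y ∂η) * φ i x) 2 (η.restrict D) :=
      memLp_finset_sum Finset.univ fun i _ => (hφmem i).const_mul _
    exact hsmem.sub h2
  have hperp : ∀ i,
      (∫ x in D, φ i x * (s x - ∑ j, (∫ y in D, φ j y * s y ∂η) * φ j x) ∂η) = 0 := by
    intro i
    have hφs : Integrable (fun x => φ i x * s x) (η.restrict D) :=
      integrable_mul_of_mem2 (hφmem i) hsmem
    have hij : ∀ j : Fin d, Integrable
        (fun x => (∫ y in D, φ j y * s y ∂η) * (φ i x * φ j x)) (η.restrict D) :=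
      fun j => (integrable_mul_of_mem2 (hφmem i) (hφmem j)).const_mul _
    calc (∫ x in D, φ i x * (s x - ∑ j, (∫ y in D, φ j y * s y ∂η) * φ j x) ∂η)
        = ∫ x in D, (φ i x * s x
            - ∑ j, (∫ y in D, φ j y * s y ∂η) * (φ i x * φ j x)) ∂η := by
          congr 1; funext x
          rw [mul_sub, Finset.mul_sum]
          congr 1
          exact Finset.sum_congr rfl fun j _ => by ring
      _ = (∫ x in D, φ i x * s x ∂η)
            - ∑ j, (∫ y in D, φ j y * s y ∂η) * ∫ x in D, φ i x * φ j x ∂η := by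
          rw [integral_sub hφs (integrable_finset_sum _ fun j _ => hij j),
            integral_finset_sum _ fun j _ => hij j]
          congr 1
          exact Finset.sum_congr rfl fun j _ => integral_const_mul _ _
      _ = 0 := by
          simp only [horth, mul_ite, mul_one, mul_zero]
          rw [Finset.sum_ite_eq, if_pos (Finset.mem_univ i)]
          exact sub_self _
  -- pointwise identities in ω
  have hptw1 : ∀ (n : ℕ) (ω : Ω),
      (∫ x in D, ((∑ i, bhat X T (φ i) n ω * φ i x)
          - ∑ i, (∫ y in D, φ i y * s y ∂η) * φ i x) ^ 2 ∂η)
        = ∑ i, (bhat X T (φ i) n ω - ∫ y in D, φ i y * s y ∂η) ^ 2 := by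
    intro n ω
    have h1 : ∀ x : ℝ, (∑ i, bhat X T (φ i) n ω * φ i x)
        - ∑ i, (∫ y in D, φ i y * s y ∂η) * φ i x
        = ∑ i, (bhat X T (φ i) n ω - ∫ y in D, φ i y * s y ∂η) * φ i x := by
      intro x
      rw [← Finset.sum_sub_distrib]
      exact Finset.sum_congr rfl fun i _ => (sub_mul _ _ _).symm
    calc (∫ x in D, ((∑ i, bhat X T (φ i) n ω * φ i x)
          - ∑ i, (∫ y in D, φ i y * s y ∂η) * φ i x) ^ 2 ∂η)
        = ∫ x in D, (∑ i, (bhat X T (φ i) n ω - ∫ y in D, φ i y * s y ∂η) * φ i x) ^ 2 ∂η := by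
          congr 1; funext x; rw [h1]
      _ = ∑ i, (bhat X T (φ i) n ω - ∫ y in D, φ i y * s y ∂η) ^ 2 :=
          norm_sq_expand φ hφmem horth _
  have hptw2 : ∀ (n : ℕ) (ω : Ω),
      (∫ x in D, ((∑ i, bhat X T (φ i) n ω * φ i x) - s x) ^ 2 ∂η)
        = (∑ i, (bhat X T (φ i) n ω - ∫ y in D, φ i y * s y ∂η) ^ 2)
          + ∫ x in D, (s x - ∑ i, (∫ y in D, φ i y * s y ∂η) * φ i x) ^ 2 ∂η := by
    intro n ω
    have h1 : ∀ x : ℝ, (∑ i, bhat X T (φ i) n ω * φ i x) - s x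
        = (∑ i, (bhat X T (φ i) n ω - ∫ y in D, φ i y * s y ∂η) * φ i x)
          - (s x - ∑ i, (∫ y in D, φ i y * s y ∂η) * φ i x) := by
      intro x
      simp only [sub_mul, Finset.sum_sub_distrib]
      ring
    calc (∫ x in D, ((∑ i, bhat X T (φ i) n ω * φ i x) - s x) ^ 2 ∂η)
        = ∫ x in D, ((∑ i, (bhat X T (φ i) n ω - ∫ y in D, φ i y * s y ∂η) * φ i x)
            - (s x - ∑ i, (∫ y in D, φ i y * s y ∂η) * φ i x)) ^ 2 ∂η := by
          congr 1; funext x; rw [h1]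
      _ = _ := norm_sq_expand_sub φ hφmem horth _ _ hvmem hperp
  -- the main probabilistic computation, for `n ≥ 1` with integrability
  have main : ∀ n : ℕ, 1 ≤ n →
      (∀ i, Integrable (fun ω => φ i (X (T / n) ω)) P ∧
        Integrable (fun ω => (φ i (X (T / n) ω)) ^ 2) P) →
      ∀ i, Integrable (fun ω => (bhat X T (φ i) n ω - ∫ y in D, φ i y * s y ∂η) ^ 2) P ∧
        ∫ ω, (bhat X T (φ i) n ω - ∫ y in D, φ i y * s y ∂η) ^ 2 ∂P
          = (1 / T) * (((n : ℝ) / T) * (∫ ω, (φ i (X (T / n) ω)) ^ 2 ∂P))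
            - (1 / (n : ℝ)) * (((n : ℝ) / T) * (∫ ω, φ i (X (T / n) ω) ∂P)) ^ 2
            + (((n : ℝ) / T) * (∫ ω, φ i (X (T / n) ω) ∂P)
                - ∫ y in D, φ i y * s y ∂η) ^ 2 := by
    intro n hn hI i
    have hΔmeas : ∀ k : ℕ,
        Measurable (fun ω => X (((k : ℝ) + 1) * T / n) ω - X ((k : ℝ) * T / n) ω) :=
      fun k => (hXmeas _).sub (hXmeas _)
    have hmap : ∀ k : ℕ,
        Measure.map (fun ω => X (((k : ℝ) + 1) * T / n) ω - X ((k : ℝ) * T / n) ω) P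
          = Measure.map (X (T / n)) P := by
      intro k
      have h0 : (0 : ℝ) ≤ (k : ℝ) * T / n := by positivity
      have h1 : (0 : ℝ) ≤ T / n := by positivity
      have h2 := hstat ((k : ℝ) * T / n) (T / n) h0 h1
      have h3 : (k : ℝ) * T / n + T / n = ((k : ℝ) + 1) * T / n := by ring
      rw [h3] at h2
      exact h2
    have hint1 : Integrable (φ i) (Measure.map (X (T / n)) P) := by
      rw [integrable_map_measure (hφmeas i).aestronglyMeasurable (hXmeas _).aemeasurable]
      exact (hI i).1
    have hint2 : Integrable (fun x => (φ i x) ^ 2) (Measure.map (X (T / n)) P) := by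
      rw [integrable_map_measure ((hφmeas i).pow_const 2).aestronglyMeasurable
        (hXmeas _).aemeasurable]
      exact (hI i).2
    have hYint : ∀ k : ℕ,
        Integrable (fun ω => φ i (X (((k : ℝ) + 1) * T / n) ω - X ((k : ℝ) * T / n) ω)) P := by
      intro k
      have h := hint1
      rw [← hmap k, integrable_map_measure (hφmeas i).aestronglyMeasurable
        (hΔmeas k).aemeasurable] at h
      exact h
    have hYsq : ∀ k : ℕ,
        Integrable (fun ω => (φ i (X (((k : ℝ) + 1) * T / n) ω - X ((k : ℝ) * T / n) ω)) ^ 2)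
          P := by
      intro k
      have h := hint2
      rw [← hmap k, integrable_map_measure ((hφmeas i).pow_const 2).aestronglyMeasurable
        (hΔmeas k).aemeasurable] at h
      exact h
    have hYmean : ∀ k : ℕ,
        ∫ ω, φ i (X (((k : ℝ) + 1) * T / n) ω - X ((k : ℝ) * T / n) ω) ∂P
          = ∫ ω, φ i (X (T / n) ω) ∂P := by
      intro k
      calc ∫ ω, φ i (X (((k : ℝ) + 1) * T / n) ω - X ((k : ℝ) * T / n) ω) ∂P
          = ∫ x, φ i x ∂(Measure.map
              (fun ω => X (((k : ℝ) + 1) * T / n) ω - X ((k : ℝ) * T / n) ω) P) :=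
            (integral_map (hΔmeas k).aemeasurable (hφmeas i).aestronglyMeasurable).symm
        _ = ∫ x, φ i x ∂(Measure.map (X (T / n)) P) := by rw [hmap k]
        _ = ∫ ω, φ i (X (T / n) ω) ∂P :=
            integral_map (hXmeas _).aemeasurable (hφmeas i).aestronglyMeasurable
    have hYsqmean : ∀ k : ℕ,
        ∫ ω, (φ i (X (((k : ℝ) + 1) * T / n) ω - X ((k : ℝ) * T / n) ω)) ^ 2 ∂P
          = ∫ ω, (φ i (X (T / n) ω)) ^ 2 ∂P := by
      intro k
      calc ∫ ω, (φ i (X (((k : ℝ) + 1) * T / n) ω - X ((k : ℝ) * T / n) ω)) ^ 2 ∂P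
          = ∫ x, (φ i x) ^ 2 ∂(Measure.map
              (fun ω => X (((k : ℝ) + 1) * T / n) ω - X ((k : ℝ) * T / n) ω) P) :=
            (integral_map (hΔmeas k).aemeasurable
              ((hφmeas i).pow_const 2).aestronglyMeasurable).symm
        _ = ∫ x, (φ i x) ^ 2 ∂(Measure.map (X (T / n)) P) := by rw [hmap k]
        _ = ∫ ω, (φ i (X (T / n) ω)) ^ 2 ∂P :=
            integral_map (hXmeas _).aemeasurable ((hφmeas i).pow_const 2).aestronglyMeasurable
    -- independence of the increments
    have htmono : Monotone (fun j : Fin (n + 1) => ((j : ℕ) : ℝ) * T / (n : ℝ)) := by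
      intro a b hab
      have hc : ((a : ℕ) : ℝ) ≤ ((b : ℕ) : ℝ) := Nat.cast_le.2 hab
      have hTn : (0 : ℝ) ≤ T / n := by positivity
      calc ((a : ℕ) : ℝ) * T / n = ((a : ℕ) : ℝ) * (T / n) := by ring
        _ ≤ ((b : ℕ) : ℝ) * (T / n) := mul_le_mul_of_nonneg_right hc hTn
        _ = ((b : ℕ) : ℝ) * T / n := by ring
    have ht0 : (0 : ℝ) ≤ (((0 : Fin (n + 1)) : ℕ) : ℝ) * T / (n : ℝ) := by positivity
    have hiid2 : iIndepFun
        (fun (k : Fin n) (ω : Ω) =>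
          X ((((k : ℕ) : ℝ) + 1) * T / n) ω - X (((k : ℕ) : ℝ) * T / n) ω) P := by
      have hfe : (fun (k : Fin n) (ω : Ω) =>
            X ((((k : ℕ) : ℝ) + 1) * T / n) ω - X (((k : ℕ) : ℝ) * T / n) ω)
          = fun (k : Fin n) (ω : Ω) =>
            X ((((k.succ : Fin (n + 1)) : ℕ) : ℝ) * T / (n : ℝ)) ω
              - X ((((k.castSucc : Fin (n + 1)) : ℕ) : ℝ) * T / (n : ℝ)) ω := by
        funext k ω
        have e1 : (((k.succ : Fin (n + 1)) : ℕ) : ℝ) = ((k : ℕ) : ℝ) + 1 := by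
          rw [Fin.val_succ]; push_cast; ring
        have e2 : (((k.castSucc : Fin (n + 1)) : ℕ) : ℝ) = ((k : ℕ) : ℝ) := by
          rw [Fin.coe_castSucc]
        rw [e1, e2]
      rw [hfe]
      exact hindep n (fun j : Fin (n + 1) => ((j : ℕ) : ℝ) * T / (n : ℝ)) htmono ht0
    have hpair : Set.Pairwise ↑(Finset.univ : Finset (Fin n)) fun (k l : Fin n) =>
        IndepFun (fun ω => φ i (X ((((k : ℕ) : ℝ) + 1) * T / n) ω - X (((k : ℕ) : ℝ) * T / n) ω))
          (fun ω => φ i (X ((((l : ℕ) : ℝ) + 1) * T / n) ω - X (((l : ℕ) : ℝ) * T / n) ω)) P := by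
      intro a _ b _ hab
      exact (hiid2.indepFun hab).comp (hφmeas i) (hφmeas i)
    have hcore := core_moment hn
      (fun (k : Fin n) (ω : Ω) =>
        φ i (X ((((k : ℕ) : ℝ) + 1) * T / n) ω - X (((k : ℕ) : ℝ) * T / n) ω))
      (fun k => (hφmeas i).comp (hΔmeas (k : ℕ)))
      hpair (fun k => hYsq (k : ℕ)) (fun k => hYmean (k : ℕ)) (fun k => hYsqmean (k : ℕ))
      hT' (∫ y in D, φ i y * s y ∂η)
    have hbh : ∀ ω : Ω, bhat X T (φ i) n ω
        = (1 / T) * ∑ k : Fin n,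
            φ i (X ((((k : ℕ) : ℝ) + 1) * T / n) ω - X (((k : ℕ) : ℝ) * T / n) ω) := by
      intro ω
      rw [bhat]
      congr 1
      exact (Fin.sum_univ_eq_sum_range
        (fun k : ℕ => φ i (X (((k : ℝ) + 1) * T / n) ω - X ((k : ℝ) * T / n) ω)) n).symm
    obtain ⟨hIc, hEc⟩ := hcore
    have hfun : (fun ω => ((1 / T) * (∑ k : Fin n,
          φ i (X ((((k : ℕ) : ℝ) + 1) * T / n) ω - X (((k : ℕ) : ℝ) * T / n) ω))
          - ∫ y in D, φ i y * s y ∂η) ^ 2)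
        = fun ω => (bhat X T (φ i) n ω - ∫ y in D, φ i y * s y ∂η) ^ 2 := by
      funext ω; rw [hbh ω]
    constructor
    · exact hfun ▸ hIc
    · calc ∫ ω, (bhat X T (φ i) n ω - ∫ y in D, φ i y * s y ∂η) ^ 2 ∂P
          = ∫ ω, ((1 / T) * (∑ k : Fin n,
              φ i (X ((((k : ℕ) : ℝ) + 1) * T / n) ω - X (((k : ℕ) : ℝ) * T / n) ω))
              - ∫ y in D, φ i y * s y ∂η) ^ 2 ∂P := by
            congr 1; funext ω; rw [hbh ω]
        _ = _ := hEc
  -- limits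
  have htn : Tendsto (fun n : ℕ => T / (n : ℝ)) atTop (nhdsWithin 0 (Set.Ioi 0)) := by
    rw [tendsto_nhdsWithin_iff]
    constructor
    · exact tendsto_const_div_atTop_nhds_zero_nat T
    · filter_upwards [eventually_ge_atTop 1] with n hn
      have hn' : (0 : ℝ) < (n : ℝ) := by exact_mod_cast hn
      exact Set.mem_Ioi.2 (div_pos hT hn')
  have hqlim : ∀ i, Tendsto (fun n : ℕ => ((n : ℝ) / T) * ∫ ω, (φ i (X (T / n) ω)) ^ 2 ∂P)
      atTop (nhds (∫ x in D, (φ i x) ^ 2 * s x ∂η)) := by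
    intro i
    have h := (hlim2 i).comp htn
    simpa only [Function.comp_def, one_div_div] using h
  have hmlim : ∀ i, Tendsto (fun n : ℕ => ((n : ℝ) / T) * ∫ ω, φ i (X (T / n) ω) ∂P)
      atTop (nhds (∫ x in D, φ i x * s x ∂η)) := by
    intro i
    have h := (hlim1 i).comp htn
    simpa only [Function.comp_def, one_div_div] using h
  have hRlim : ∀ i, Tendsto (fun n : ℕ =>
      (1 / T) * (((n : ℝ) / T) * (∫ ω, (φ i (X (T / n) ω)) ^ 2 ∂P))
        - (1 / (n : ℝ)) * (((n : ℝ) / T) * (∫ ω, φ i (X (T / n) ω) ∂P)) ^ 2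
        + (((n : ℝ) / T) * (∫ ω, φ i (X (T / n) ω) ∂P) - ∫ y in D, φ i y * s y ∂η) ^ 2)
      atTop (nhds ((1 / T) * ∫ x in D, (φ i x) ^ 2 * s x ∂η)) := by
    intro i
    have h1 := (hqlim i).const_mul (1 / T)
    have h2 := tendsto_one_div_atTop_nhds_zero_nat.mul ((hmlim i).pow 2)
    have h3 := ((hmlim i).sub_const (∫ y in D, φ i y * s y ∂η)).pow 2
    have h4 := (h1.sub h2).add h3
    simpa using h4
  have hRsum : Tendsto (fun n : ℕ => ∑ i,
      ((1 / T) * (((n : ℝ) / T) * (∫ ω, (φ i (X (T / n) ω)) ^ 2 ∂P))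
        - (1 / (n : ℝ)) * (((n : ℝ) / T) * (∫ ω, φ i (X (T / n) ω) ∂P)) ^ 2
        + (((n : ℝ) / T) * (∫ ω, φ i (X (T / n) ω) ∂P) - ∫ y in D, φ i y * s y ∂η) ^ 2))
      atTop (nhds ((1 / T) * ∑ i, ∫ x in D, (φ i x) ^ 2 * s x ∂η)) := by
    have h := tendsto_finset_sum Finset.univ (fun i (_ : i ∈ Finset.univ) => hRlim i)
    simpa only [← Finset.mul_sum] using h
  have hev : ∀ᶠ n : ℕ in atTop, 1 ≤ n ∧ ∀ i,
      Integrable (fun ω => φ i (X (T / n) ω)) P ∧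
        Integrable (fun ω => (φ i (X (T / n) ω)) ^ 2) P := by
    refine (eventually_ge_atTop 1).and ?_
    rw [eventually_all]
    intro i
    exact htn.eventually (hint i)
  have hK0 : 0 ≤ ∫ x in D, (s x - ∑ i, (∫ y in D, φ i y * s y ∂η) * φ i x) ^ 2 ∂η :=
    integral_nonneg fun x => sq_nonneg _
  constructor
  · -- first limit
    have key1 : ∀ᶠ n : ℕ in atTop,
        (fun n : ℕ => ENNReal.ofReal (∑ i,
          ((1 / T) * (((n : ℝ) / T) * (∫ ω, (φ i (X (T / n) ω)) ^ 2 ∂P))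
            - (1 / (n : ℝ)) * (((n : ℝ) / T) * (∫ ω, φ i (X (T / n) ω) ∂P)) ^ 2
            + (((n : ℝ) / T) * (∫ ω, φ i (X (T / n) ω) ∂P)
                - ∫ y in D, φ i y * s y ∂η) ^ 2))) n
          = ∫⁻ ω, ENNReal.ofReal
            (∫ x in D, ((∑ i, bhat X T (φ i) n ω * φ i x)
              - ∑ i, (∫ y in D, φ i y * s y ∂η) * φ i x) ^ 2 ∂η) ∂P := by
      filter_upwards [hev] with n hn
      obtain ⟨hn1, hI⟩ := hn
      have hci := main n hn1 hI
      have hIsum : Integrable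
          (fun ω => ∑ i, (bhat X T (φ i) n ω - ∫ y in D, φ i y * s y ∂η) ^ 2) P :=
        integrable_finset_sum _ fun i _ => (hci i).1
      calc ENNReal.ofReal (∑ i,
            ((1 / T) * (((n : ℝ) / T) * (∫ ω, (φ i (X (T / n) ω)) ^ 2 ∂P))
              - (1 / (n : ℝ)) * (((n : ℝ) / T) * (∫ ω, φ i (X (T / n) ω) ∂P)) ^ 2
              + (((n : ℝ) / T) * (∫ ω, φ i (X (T / n) ω) ∂P)
                  - ∫ y in D, φ i y * s y ∂η) ^ 2))
          = ENNReal.ofReal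
              (∫ ω, ∑ i, (bhat X T (φ i) n ω - ∫ y in D, φ i y * s y ∂η) ^ 2 ∂P) := by
            rw [integral_finset_sum _ fun i _ => (hci i).1]
            congr 1
            exact (Finset.sum_congr rfl fun i _ => (hci i).2).symm
        _ = ∫⁻ ω, ENNReal.ofReal
              (∑ i, (bhat X T (φ i) n ω - ∫ y in D, φ i y * s y ∂η) ^ 2) ∂P :=
            ofReal_integral_eq_lintegral_ofReal hIsum
              (Eventually.of_forall fun ω => Finset.sum_nonneg fun i _ => sq_nonneg _)
        _ = ∫⁻ ω, ENNReal.ofReal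
              (∫ x in D, ((∑ i, bhat X T (φ i) n ω * φ i x)
                - ∑ i, (∫ y in D, φ i y * s y ∂η) * φ i x) ^ 2 ∂η) ∂P := by
            refine lintegral_congr fun ω => ?_
            rw [hptw1 n ω]
    have hc := (ENNReal.continuous_ofReal.tendsto _).comp hRsum
    exact hc.congr' key1
  · -- second limit
    have key2 : ∀ᶠ n : ℕ in atTop,
        (fun n : ℕ => ENNReal.ofReal
          ((∫ x in D, (s x - ∑ i, (∫ y in D, φ i y * s y ∂η) * φ i x) ^ 2 ∂η) + ∑ i,
          ((1 / T) * (((n : ℝ) / T) * (∫ ω, (φ i (X (T / n) ω)) ^ 2 ∂P))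
            - (1 / (n : ℝ)) * (((n : ℝ) / T) * (∫ ω, φ i (X (T / n) ω) ∂P)) ^ 2
            + (((n : ℝ) / T) * (∫ ω, φ i (X (T / n) ω) ∂P)
                - ∫ y in D, φ i y * s y ∂η) ^ 2))) n
          = ∫⁻ ω, ENNReal.ofReal
            (∫ x in D, ((∑ i, bhat X T (φ i) n ω * φ i x) - s x) ^ 2 ∂η) ∂P := by
      filter_upwards [hev] with n hn
      obtain ⟨hn1, hI⟩ := hn
      have hci := main n hn1 hI
      have hIsum : Integrable
          (fun ω => (∑ i, (bhat X T (φ i) n ω - ∫ y in D, φ i y * s y ∂η) ^ 2)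
            + ∫ x in D, (s x - ∑ i, (∫ y in D, φ i y * s y ∂η) * φ i x) ^ 2 ∂η) P :=
        (integrable_finset_sum _ fun i _ => (hci i).1).add (integrable_const _)
      calc ENNReal.ofReal
            ((∫ x in D, (s x - ∑ i, (∫ y in D, φ i y * s y ∂η) * φ i x) ^ 2 ∂η) + ∑ i,
            ((1 / T) * (((n : ℝ) / T) * (∫ ω, (φ i (X (T / n) ω)) ^ 2 ∂P))
              - (1 / (n : ℝ)) * (((n : ℝ) / T) * (∫ ω, φ i (X (T / n) ω) ∂P)) ^ 2
              + (((n : ℝ) / T) * (∫ ω, φ i (X (T / n) ω) ∂P)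
                  - ∫ y in D, φ i y * s y ∂η) ^ 2))
          = ENNReal.ofReal
              (∫ ω, ((∑ i, (bhat X T (φ i) n ω - ∫ y in D, φ i y * s y ∂η) ^ 2)
                + ∫ x in D, (s x - ∑ i, (∫ y in D, φ i y * s y ∂η) * φ i x) ^ 2 ∂η) ∂P) := by
            rw [integral_add (integrable_finset_sum _ fun i _ => (hci i).1) (integrable_const _),
              integral_const, integral_finset_sum _ fun i _ => (hci i).1]
            simp only [measure_univ, ENNReal.toReal_one, probReal_univ, smul_eq_mul, one_mul]
            rw [Finset.sum_congr rfl fun i _ => (hci i).2]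
            congr 1
            exact add_comm _ _
        _ = ∫⁻ ω, ENNReal.ofReal
              ((∑ i, (bhat X T (φ i) n ω - ∫ y in D, φ i y * s y ∂η) ^ 2)
                + ∫ x in D, (s x - ∑ i, (∫ y in D, φ i y * s y ∂η) * φ i x) ^ 2 ∂η) ∂P :=
            ofReal_integral_eq_lintegral_ofReal hIsum
              (Eventually.of_forall fun ω =>
                add_nonneg (Finset.sum_nonneg fun i _ => sq_nonneg _) hK0)
        _ = ∫⁻ ω, ENNReal.ofReal
              (∫ x in D, ((∑ i, bhat X T (φ i) n ω * φ i x) - s x) ^ 2 ∂η) ∂P := by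
            refine lintegral_congr fun ω => ?_
            rw [hptw2 n ω]
    have hKconst : Tendsto (fun _ : ℕ =>
        ∫ x in D, (s x - ∑ i, (∫ y in D, φ i y * s y ∂η) * φ i x) ^ 2 ∂η) atTop
        (nhds (∫ x in D, (s x - ∑ i, (∫ y in D, φ i y * s y ∂η) * φ i x) ^ 2 ∂η)) :=
      tendsto_const_nhds
    have hc := (ENNReal.continuous_ofReal.tendsto _).comp (hKconst.add hRsum)
    exact hc.congr' key2

end ApproxProj

end
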